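/- Let H be a complex Hilbert space, n ∈ ℕ, and A₁,…,Aₙ, B₁,…,Bₙ ∈ B(H) such that each Aⱼ is normal, the Aⱼ mutually commute, each Bⱼ is normal, the Bⱼ mutually commute, and Σ_{j=1}^n Aⱼ* Aⱼ ≤ 1, Σ_{j=1}^n Bⱼ* Bⱼ ≤ 1. Then for every X ∈ B(H): ‖(1 − Σ_{j=1}^n Aⱼ* Aⱼ)^{1/2} · X · (1 − Σ_{j=1}^n Bⱼ* Bⱼ)^{1/2}‖ ≤ ‖X − Σ_{j=1}^n Aⱼ* X Bⱼ‖. -/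

import Mathlib

set_option synthInstance.maxHeartbeats 400000

open ContinuousLinearMap

open scoped InnerProductSpace NNReal

open NormedSpace in
/-- **Fuglede's theorem**: if `M` is a normal element of a C*-algebra and `T` commutes with `M`,
then `T` commutes with `star M`. -/
theorem fuglede_commute' {E : Type*} [NormedRing E] [StarRing E] [CStarRing E]
    [NormedAlgebra ℂ E] [CompleteSpace E] [StarModule ℂ E]
    {M T : E} (hM : IsStarNormal M) (h : Commute M T) : Commute (star M) T := by
  rcases subsingleton_or_nontrivial E with hE | hE
  · exact Subsingleton.elim _ _
  letI : NormedAlgebra ℚ E := NormedAlgebra.restrictScalars ℚ ℂ E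
  have hMM : Commute (star M) M := hM.star_comm_self
  set f : ℂ → E := fun c => exp (c • star M) * T * exp (c • (-star M)) with hf
  have hdiff : Differentiable ℂ f := by
    have d1 : Differentiable ℂ (fun c : ℂ => exp (c • star M)) :=
      fun c => (hasDerivAt_exp_smul_const (star M) c).differentiableAt
    have d2 : Differentiable ℂ (fun c : ℂ => exp (c • (-star M))) :=
      fun c => (hasDerivAt_exp_smul_const (-star M) c).differentiableAt
    exact (d1.mul (differentiable_const T)).mul d2
  have hbdd : ∀ c, ‖f c‖ ≤ ‖T‖ := by
    intro c
    set c' : ℂ := (starRingEnd ℂ) c with hc'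
    have hTe : Commute T (exp (c' • M)) := ((h.symm).smul_right c').exp_right
    have hTe' : Commute T (exp (c' • (-M))) := ((h.symm.neg_right).smul_right c').exp_right
    have hTid : exp (c' • (-M)) * T * exp (c' • M) = T := by
      rw [← hTe'.eq, mul_assoc, ← exp_add_of_commute]
      · simp [← smul_add]
      · exact ((Commute.refl M).neg_left.smul_left c').smul_right c'
    have hfc : f c = exp (c • star M + c' • (-M)) * T *
        exp (c' • M + c • (-star M)) := by
      rw [exp_add_of_commute ((hMM.neg_right.smul_left c).smul_right c'),
        exp_add_of_commute ((hMM.symm.neg_right.smul_left c').smul_right c)]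
      rw [hf]
      simp only []
      conv_lhs => rw [← hTid]
      noncomm_ring
    have hcc : (starRingEnd ℂ) c' = c := by rw [hc']; exact Complex.conj_conj c
    have hskew : star (c • star M + c' • (-M)) = -(c • star M + c' • (-M)) := by
      simp only [star_add, star_smul, star_neg, star_star, Complex.star_def, hc', hcc, Complex.conj_conj]
      module
    have h2 : (c' • M + c • (-star M)) = -(c • star M + c' • (-M)) := by
      module
    have hu1 : exp (c • star M + c' • (-M)) ∈ unitary E :=
      exp_mem_unitary_of_mem_skewAdjoint (by simpa [skewAdjoint.mem_iff] using hskew)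
    have hu2 : exp (c' • M + c • (-star M)) ∈ unitary E := by
      rw [h2]
      exact exp_mem_unitary_of_mem_skewAdjoint
        (by rw [skewAdjoint.mem_iff, star_neg, hskew, neg_neg])
    calc ‖f c‖ ≤ ‖exp (c • star M + c' • (-M)) * T‖ * ‖exp (c' • M + c • (-star M))‖ := by
          rw [hfc]; exact norm_mul_le _ _
      _ ≤ ‖exp (c • star M + c' • (-M))‖ * ‖T‖ * ‖exp (c' • M + c • (-star M))‖ := by
          gcongr; exact norm_mul_le _ _
      _ = ‖T‖ := by
          rw [CStarRing.norm_coe_unitary ⟨_, hu1⟩, CStarRing.norm_coe_unitary ⟨_, hu2⟩]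
          ring
  have hconst : ∀ c, f c = T := by
    intro c
    have : f c = f 0 := by
      refine hdiff.apply_eq_apply_of_bounded ?_ c 0
      rw [Metric.isBounded_iff_subset_closedBall 0]
      exact ⟨‖T‖, by rintro y ⟨c, rfl⟩; simpa using hbdd c⟩
    simpa [hf] using this
  have hkey : ∀ c : ℂ, exp (c • star M) * T = T * exp (c • star M) := by
    intro c
    have h1 := congrArg (· * exp (c • star M)) (hconst c)
    simp only [hf] at h1
    rw [mul_assoc (exp (c • star M) * T), ← exp_add_of_commute
      (((Commute.refl (star M)).neg_left.smul_left c).smul_right c)] at h1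
    simpa using h1
  have hd1 : HasDerivAt (fun c : ℂ => exp (c • star M) * T)
      (exp ((0:ℂ) • star M) * star M * T) 0 :=
    (hasDerivAt_exp_smul_const (star M) 0).mul_const T
  have hd2 : HasDerivAt (fun c : ℂ => T * exp (c • star M))
      (T * (exp ((0:ℂ) • star M) * star M)) 0 :=
    (hasDerivAt_exp_smul_const (star M) 0).const_mul T
  have heq : (fun c : ℂ => exp (c • star M) * T) = fun c : ℂ => T * exp (c • star M) :=
    funext hkey
  rw [heq] at hd1
  have := hd1.unique hd2
  simp only [zero_smul, exp_zero, one_mul, mul_one] at this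
  exact this

/-- Cauchy–Schwarz for finite sums of square roots. -/
lemma sum_sqrt_mul_sqrt_le' {ι : Type*} (s : Finset ι) (u v : ι → ℝ)
    (hu : ∀ i ∈ s, 0 ≤ u i) (hv : ∀ i ∈ s, 0 ≤ v i) :
    ∑ i ∈ s, Real.sqrt (u i) * Real.sqrt (v i) ≤
      Real.sqrt (∑ i ∈ s, u i) * Real.sqrt (∑ i ∈ s, v i) := by
  have h := Finset.sum_sq_le_sum_mul_sum_of_sq_eq_mul s
    (r := fun i => Real.sqrt (u i) * Real.sqrt (v i)) (f := u) (g := v) hu hv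
    (fun i hi => by rw [mul_pow, Real.sq_sqrt (hu i hi), Real.sq_sqrt (hv i hi)])
  have h0 : 0 ≤ ∑ i ∈ s, Real.sqrt (u i) * Real.sqrt (v i) :=
    Finset.sum_nonneg fun i _ => mul_nonneg (Real.sqrt_nonneg _) (Real.sqrt_nonneg _)
  rw [← Real.sqrt_mul_self h0, ← Real.sqrt_mul (Finset.sum_nonneg hu)]
  exact Real.sqrt_le_sqrt (by simpa [sq] using h)

section Aux

variable {H : Type*} [NormedAddCommGroup H] [InnerProductSpace ℂ H] [CompleteSpace H]

lemma aux_inner_nonneg {T : H →L[ℂ] H} (hT : 0 ≤ T) (z : H) :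
    0 ≤ RCLike.re (⟪T z, z⟫_ℂ) :=
  ((ContinuousLinearMap.nonneg_iff_isPositive T).mp hT).re_inner_nonneg_left z

lemma aux_sqrt_comm {T : H →L[ℂ] H} : Commute (CFC.sqrt (1 - T)) T := by
  have h1 : Commute (CFC.sqrt (1 - T)) (1 - T) := by
    have := cfcₙ_commute_cfcₙ (A := H →L[ℂ] H) (NNReal.sqrt) (id : ℝ≥0 → ℝ≥0) (1 - T)
    by_cases hp : (0 : H →L[ℂ] H) ≤ (1 - T)
    · rwa [cfcₙ_id ℝ≥0 (1 - T) hp] at this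
    · rw [CFC.sqrt, cfcₙ_apply_of_not_predicate (1 - T) hp]
      exact Commute.zero_left _
  have h2 := (Commute.one_right (CFC.sqrt (1 - T))).sub_right h1
  rwa [sub_sub_cancel] at h2

lemma aux_sqrt_sa {T : H →L[ℂ] H} : adjoint (CFC.sqrt (1 - T)) = CFC.sqrt (1 - T) := by
  have : IsSelfAdjoint (CFC.sqrt (1 - T)) := .of_nonneg (CFC.sqrt_nonneg _)
  rw [← ContinuousLinearMap.star_eq_adjoint]
  exact this

lemma aux_term_eq {T : H →L[ℂ] H} (h0 : 0 ≤ T) (h1 : T ≤ 1) (z : H) (k : ℕ) :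
    RCLike.re (⟪(T ^ k) (CFC.sqrt (1 - T) z), CFC.sqrt (1 - T) z⟫_ℂ) =
      RCLike.re (⟪(T ^ k * (1 - T)) z, z⟫_ℂ) := by
  set S := CFC.sqrt (1 - T) with hS
  have hS2 : S * S = 1 - T := by
    have := CFC.sq_sqrt (1 - T) (sub_nonneg.mpr h1)
    rwa [pow_two] at this
  have e1 : (⟪(T ^ k) (S z), S z⟫_ℂ) = ⟪(S * T ^ k * S) z, z⟫_ℂ := by
    rw [← ContinuousLinearMap.adjoint_inner_left S z ((T ^ k) (S z)), aux_sqrt_sa]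
    simp [ContinuousLinearMap.mul_apply, hS]
  have e2 : S * T ^ k * S = T ^ k * (1 - T) := by
    rw [(aux_sqrt_comm.pow_right k).eq, mul_assoc, hS2]
  rw [e1, e2]

lemma aux_sum_le {T : H →L[ℂ] H} (h0 : 0 ≤ T) (h1 : T ≤ 1) (z : H) (N : ℕ) :
    ∑ k ∈ Finset.range N,
      RCLike.re (⟪(T ^ k) (CFC.sqrt (1 - T) z), CFC.sqrt (1 - T) z⟫_ℂ) ≤ ‖z‖ ^ 2 := by
  have hTk : ∀ k, (0 : H →L[ℂ] H) ≤ T ^ k := fun k => CStarAlgebra.pow_nonneg h0 k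
  have hgeom : (∑ k ∈ Finset.range N, T ^ k) * (1 - T) = 1 - T ^ N := by
    have h := geom_sum_mul T N
    have : (∑ k ∈ Finset.range N, T ^ k) * (1 - T) =
        -((∑ k ∈ Finset.range N, T ^ k) * (T - 1)) := by noncomm_ring
    rw [this, h]; noncomm_ring
  calc ∑ k ∈ Finset.range N,
      RCLike.re (⟪(T ^ k) (CFC.sqrt (1 - T) z), CFC.sqrt (1 - T) z⟫_ℂ)
      = ∑ k ∈ Finset.range N, RCLike.re (⟪(T ^ k * (1 - T)) z, z⟫_ℂ) := by
        refine Finset.sum_congr rfl fun k _ => aux_term_eq h0 h1 z k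
    _ = RCLike.re (⟪((∑ k ∈ Finset.range N, T ^ k) * (1 - T)) z, z⟫_ℂ) := by
        rw [Finset.sum_mul, ContinuousLinearMap.sum_apply, sum_inner, map_sum]
    _ = RCLike.re (⟪(1 - T ^ N) z, z⟫_ℂ) := by rw [hgeom]
    _ = RCLike.re (⟪z, z⟫_ℂ) - RCLike.re (⟪(T ^ N) z, z⟫_ℂ) := by
        rw [ContinuousLinearMap.sub_apply, inner_sub_left, map_sub,
          ContinuousLinearMap.one_apply]
    _ ≤ RCLike.re (⟪z, z⟫_ℂ) := by
        have := aux_inner_nonneg (hTk N) z; linarith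
    _ = ‖z‖ ^ 2 := inner_self_eq_norm_sq z

lemma aux_term_le {T : H →L[ℂ] H} (h0 : 0 ≤ T) (h1 : T ≤ 1) (z : H) (k : ℕ) :
    RCLike.re (⟪(T ^ k) (CFC.sqrt (1 - T) z), CFC.sqrt (1 - T) z⟫_ℂ) ≤ ‖z‖ ^ 2 := by
  have hTk : ∀ m, (0 : H →L[ℂ] H) ≤ T ^ m := fun m => CStarAlgebra.pow_nonneg h0 m
  refine le_trans ?_ (aux_sum_le h0 h1 z (k + 1))
  refine Finset.single_le_sum (f := fun m =>
      RCLike.re (⟪(T ^ m) (CFC.sqrt (1 - T) z), CFC.sqrt (1 - T) z⟫_ℂ)) ?_ ?_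
  · intro m _
    exact aux_inner_nonneg (hTk m) _
  · exact Finset.self_mem_range_succ k

end Aux

set_option maxHeartbeats 1000000

/-- For commuting families of normal contractions (`Σ Aⱼ* Aⱼ ≤ 1`, `Σ Bⱼ* Bⱼ ≤ 1`),
`‖(1 − Σ Aⱼ* Aⱼ)^{1/2} X (1 − Σ Bⱼ* Bⱼ)^{1/2}‖ ≤ ‖X − Σ Aⱼ* X Bⱼ‖`. -/
theorem norm_sqrt_one_sub_mul_le
    {H : Type*} [NormedAddCommGroup H] [InnerProductSpace ℂ H] [CompleteSpace H]
    (n : ℕ) (A B : Fin n → H →L[ℂ] H)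
    (hA : ∀ j, IsStarNormal (A j)) (hA' : ∀ i j, Commute (A i) (A j))
    (hB : ∀ j, IsStarNormal (B j)) (hB' : ∀ i j, Commute (B i) (B j))
    (hA1 : ∑ j, adjoint (A j) * A j ≤ 1) (hB1 : ∑ j, adjoint (B j) * B j ≤ 1)
    (X : H →L[ℂ] H) :
    ‖CFC.sqrt (1 - ∑ j, adjoint (A j) * A j) * X *
        CFC.sqrt (1 - ∑ j, adjoint (B j) * B j)‖ ≤
      ‖X - ∑ j, adjoint (A j) * X * B j‖ := by
  rcases subsingleton_or_nontrivial H with hH | hH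
  · haveI : Subsingleton (H →L[ℂ] H) :=
      ⟨fun f g => ContinuousLinearMap.ext fun x => Subsingleton.elim _ _⟩
    rw [Subsingleton.elim (CFC.sqrt (1 - ∑ j, adjoint (A j) * A j) * X *
        CFC.sqrt (1 - ∑ j, adjoint (B j) * B j)) 0, norm_zero]
    exact norm_nonneg _
  set P : H →L[ℂ] H := ∑ j, adjoint (A j) * A j with hPdef
  set Q : H →L[ℂ] H := ∑ j, adjoint (B j) * B j with hQdef
  set L : H →L[ℂ] H := CFC.sqrt (1 - P) with hLdef
  set R : H →L[ℂ] H := CFC.sqrt (1 - Q) with hRdef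
  set D : H →L[ℂ] H := X - ∑ j, adjoint (A j) * X * B j with hDdef
  -- commutation facts, via Fuglede's theorem
  have hfugA : ∀ i j, Commute (adjoint (A i)) (A j) := fun i j => by
    have := fuglede_commute' (hA i) (hA' i j)
    rwa [ContinuousLinearMap.star_eq_adjoint] at this
  have hfugB : ∀ i j, Commute (adjoint (B i)) (B j) := fun i j => by
    have := fuglede_commute' (hB i) (hB' i j)
    rwa [ContinuousLinearMap.star_eq_adjoint] at this
  have hadjA : ∀ i j, Commute (adjoint (A i)) (adjoint (A j)) := fun i j => by
    have := (hA' i j).star_star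
    simpa only [ContinuousLinearMap.star_eq_adjoint] using this
  have hadjB : ∀ i j, Commute (adjoint (B i)) (adjoint (B j)) := fun i j => by
    have := (hB' i j).star_star
    simpa only [ContinuousLinearMap.star_eq_adjoint] using this
  have hPA : ∀ j, Commute (adjoint (A j)) P :=
    fun j => Commute.sum_right _ _ _ fun i _ => (hadjA j i).mul_right (hfugA j i)
  have hQB : ∀ j, Commute (adjoint (B j)) Q :=
    fun j => Commute.sum_right _ _ _ fun i _ => (hadjB j i).mul_right (hfugB j i)
  -- positivity facts
  have hPpos : (0 : H →L[ℂ] H) ≤ P := by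
    rw [hPdef]
    refine Finset.sum_nonneg fun j _ => ?_
    simpa only [ContinuousLinearMap.star_eq_adjoint] using star_mul_self_nonneg (A j)
  have hQpos : (0 : H →L[ℂ] H) ≤ Q := by
    rw [hQdef]
    refine Finset.sum_nonneg fun j _ => ?_
    simpa only [ContinuousLinearMap.star_eq_adjoint] using star_mul_self_nonneg (B j)
  have hPpow : ∀ k, (0 : H →L[ℂ] H) ≤ P ^ k := fun k => CStarAlgebra.pow_nonneg hPpos k
  have hQpow : ∀ k, (0 : H →L[ℂ] H) ≤ Q ^ k := fun k => CStarAlgebra.pow_nonneg hQpos k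
  have hLsa : adjoint L = L := by rw [hLdef]; exact aux_sqrt_sa
  -- the key sums
  have hQsum : ∀ k : ℕ, ∑ j, adjoint (B j) * Q ^ k * B j = Q ^ (k + 1) := by
    intro k
    have h1 : ∀ j, adjoint (B j) * Q ^ k * B j = Q ^ k * (adjoint (B j) * B j) := fun j => by
      rw [((hQB j).pow_right k).eq, mul_assoc]
    rw [Finset.sum_congr rfl fun j _ => h1 j, ← Finset.mul_sum, ← hQdef]
    exact (pow_succ Q k).symm
  have hPsum : ∀ k : ℕ, ∑ j, adjoint (A j) * P ^ k * A j = P ^ (k + 1) := by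
    intro k
    have h1 : ∀ j, adjoint (A j) * P ^ k * A j = P ^ k * (adjoint (A j) * A j) := fun j => by
      rw [((hPA j).pow_right k).eq, mul_assoc]
    rw [Finset.sum_congr rfl fun j _ => h1 j, ← Finset.mul_sum, ← hPdef]
    exact (pow_succ P k).symm
  -- the transfer map and telescoping
  set Φ : (H →L[ℂ] H) → (H →L[ℂ] H) := fun Y => ∑ j, adjoint (A j) * Y * B j with hΦdef
  have hDX : D = X - Φ X := by rw [hΦdef]
  have hΦsub : ∀ Y Z, Φ (Y - Z) = Φ Y - Φ Z := by
    intro Y Z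
    simp only [hΦdef, mul_sub, sub_mul, Finset.sum_sub_distrib]
  have hiter_sub : ∀ (k : ℕ) Y Z, Φ^[k] (Y - Z) = Φ^[k] Y - Φ^[k] Z := by
    intro k
    induction k with
    | zero => intro Y Z; simp
    | succ k ih =>
      intro Y Z
      rw [Function.iterate_succ_apply, Function.iterate_succ_apply,
        Function.iterate_succ_apply, hΦsub, ih]
  have htel : ∀ N : ℕ, ∑ k ∈ Finset.range N, Φ^[k] D + Φ^[N] X = X := by
    intro N
    induction N with
    | zero => simp
    | succ N ih =>
      rw [Finset.sum_range_succ, Function.iterate_succ_apply]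
      have h1 : Φ^[N] D = Φ^[N] X - Φ^[N] (Φ X) := by rw [hDX, hiter_sub]
      calc ∑ k ∈ Finset.range N, Φ^[k] D + Φ^[N] D + Φ^[N] (Φ X)
          = ∑ k ∈ Finset.range N, Φ^[k] D + Φ^[N] X := by rw [h1]; abel
        _ = X := ih
  -- the key iterated Cauchy–Schwarz estimate
  have hiter : ∀ (Y : H →L[ℂ] H) (k : ℕ) (x y : H), ‖(⟪(Φ^[k] Y) x, y⟫_ℂ)‖ ≤
      ‖Y‖ * (Real.sqrt (RCLike.re (⟪(Q ^ k) x, x⟫_ℂ)) *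
        Real.sqrt (RCLike.re (⟪(P ^ k) y, y⟫_ℂ))) := by
    intro Y k
    induction k with
    | zero =>
      intro x y
      simp only [Function.iterate_zero, id_eq, pow_zero, ContinuousLinearMap.one_apply]
      rw [inner_self_eq_norm_sq, inner_self_eq_norm_sq, Real.sqrt_sq (norm_nonneg _),
        Real.sqrt_sq (norm_nonneg _)]
      calc ‖(⟪Y x, y⟫_ℂ)‖ ≤ ‖Y x‖ * ‖y‖ := norm_inner_le_norm _ _
        _ ≤ (‖Y‖ * ‖x‖) * ‖y‖ := by gcongr; exact Y.le_opNorm x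
        _ = ‖Y‖ * (‖x‖ * ‖y‖) := by ring
    | succ k ih =>
      intro x y
      rw [Function.iterate_succ_apply']
      have e1 : (Φ (Φ^[k] Y)) x = ∑ j, (adjoint (A j)) ((Φ^[k] Y) ((B j) x)) := by
        simp only [hΦdef, ContinuousLinearMap.sum_apply, ContinuousLinearMap.mul_apply]
      have hsum1 : ∑ j, RCLike.re (⟪(Q ^ k) ((B j) x), (B j) x⟫_ℂ)
          = RCLike.re (⟪(Q ^ (k + 1)) x, x⟫_ℂ) := by
        have h2 : ∀ j : Fin n, (⟪(Q ^ k) ((B j) x), (B j) x⟫_ℂ)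
            = ⟪(adjoint (B j) * Q ^ k * B j) x, x⟫_ℂ := fun j => by
          rw [← ContinuousLinearMap.adjoint_inner_left (B j) x ((Q ^ k) ((B j) x))]
          simp [ContinuousLinearMap.mul_apply]
        rw [Finset.sum_congr rfl fun j _ => by rw [h2 j], ← map_sum, ← sum_inner,
          ← ContinuousLinearMap.sum_apply, hQsum k]
      have hsum2 : ∑ j, RCLike.re (⟪(P ^ k) ((A j) y), (A j) y⟫_ℂ)
          = RCLike.re (⟪(P ^ (k + 1)) y, y⟫_ℂ) := by
        have h2 : ∀ j : Fin n, (⟪(P ^ k) ((A j) y), (A j) y⟫_ℂ)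
            = ⟪(adjoint (A j) * P ^ k * A j) y, y⟫_ℂ := fun j => by
          rw [← ContinuousLinearMap.adjoint_inner_left (A j) y ((P ^ k) ((A j) y))]
          simp [ContinuousLinearMap.mul_apply]
        rw [Finset.sum_congr rfl fun j _ => by rw [h2 j], ← map_sum, ← sum_inner,
          ← ContinuousLinearMap.sum_apply, hPsum k]
      calc ‖(⟪(Φ (Φ^[k] Y)) x, y⟫_ℂ)‖
          = ‖∑ j, (⟪(adjoint (A j)) ((Φ^[k] Y) ((B j) x)), y⟫_ℂ)‖ := by
            rw [e1, sum_inner]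
        _ ≤ ∑ j, ‖(⟪(adjoint (A j)) ((Φ^[k] Y) ((B j) x)), y⟫_ℂ)‖ := norm_sum_le _ _
        _ = ∑ j, ‖(⟪(Φ^[k] Y) ((B j) x), (A j) y⟫_ℂ)‖ := by
            refine Finset.sum_congr rfl fun j _ => ?_
            rw [ContinuousLinearMap.adjoint_inner_left]
        _ ≤ ∑ j, ‖Y‖ * (Real.sqrt (RCLike.re (⟪(Q ^ k) ((B j) x), (B j) x⟫_ℂ)) *
              Real.sqrt (RCLike.re (⟪(P ^ k) ((A j) y), (A j) y⟫_ℂ))) :=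
            Finset.sum_le_sum fun j _ => ih _ _
        _ = ‖Y‖ * ∑ j, (Real.sqrt (RCLike.re (⟪(Q ^ k) ((B j) x), (B j) x⟫_ℂ)) *
              Real.sqrt (RCLike.re (⟪(P ^ k) ((A j) y), (A j) y⟫_ℂ))) := by
            rw [Finset.mul_sum]
        _ ≤ ‖Y‖ * (Real.sqrt (∑ j, RCLike.re (⟪(Q ^ k) ((B j) x), (B j) x⟫_ℂ)) *
              Real.sqrt (∑ j, RCLike.re (⟪(P ^ k) ((A j) y), (A j) y⟫_ℂ))) := by
            refine mul_le_mul_of_nonneg_left ?_ (norm_nonneg Y)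
            exact sum_sqrt_mul_sqrt_le' _ _ _
              (fun j _ => aux_inner_nonneg (hQpow k) _)
              (fun j _ => aux_inner_nonneg (hPpow k) _)
        _ = ‖Y‖ * (Real.sqrt (RCLike.re (⟪(Q ^ (k + 1)) x, x⟫_ℂ)) *
              Real.sqrt (RCLike.re (⟪(P ^ (k + 1)) y, y⟫_ℂ))) := by
            rw [hsum1, hsum2]
  -- the pairing estimate
  have pairing : ∀ x y : H, ‖(⟪X (R x), L y⟫_ℂ)‖ ≤ ‖D‖ * (‖x‖ * ‖y‖) := by
    intro x y
    set u : ℕ → ℝ := fun k => RCLike.re (⟪(Q ^ k) (R x), R x⟫_ℂ) with hu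
    set v : ℕ → ℝ := fun k => RCLike.re (⟪(P ^ k) (L y), L y⟫_ℂ) with hv
    have hu0 : ∀ k, 0 ≤ u k := fun k => aux_inner_nonneg (hQpow k) _
    have hv0 : ∀ k, 0 ≤ v k := fun k => aux_inner_nonneg (hPpow k) _
    have huS : ∀ N, ∑ k ∈ Finset.range N, u k ≤ ‖x‖ ^ 2 := by
      intro N
      have := aux_sum_le hQpos hB1 x N
      rw [← hRdef] at this
      simpa only [hu] using this
    have hvS : ∀ N, ∑ k ∈ Finset.range N, v k ≤ ‖y‖ ^ 2 := by
      intro N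
      have := aux_sum_le hPpos hA1 y N
      rw [← hLdef] at this
      simpa only [hv] using this
    have hterm_v : ∀ k, v k ≤ ‖y‖ ^ 2 := by
      intro k
      have := aux_term_le hPpos hA1 y k
      rw [← hLdef] at this
      simpa only [hv] using this
    have husum : Summable u := summable_of_sum_range_le hu0 huS
    have hulim : Filter.Tendsto (fun N => Real.sqrt (u N)) Filter.atTop (nhds 0) := by
      have h2 := husum.tendsto_atTop_zero
      have h3 := (Real.continuous_sqrt.tendsto 0).comp h2
      simpa [Function.comp_def] using h3
    have bound : ∀ N, ‖(⟪X (R x), L y⟫_ℂ)‖ ≤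
        ‖D‖ * (‖x‖ * ‖y‖) + ‖X‖ * (Real.sqrt (u N) * ‖y‖) := by
      intro N
      have hXapp : (⟪X (R x), L y⟫_ℂ) =
          (∑ k ∈ Finset.range N, ⟪(Φ^[k] D) (R x), L y⟫_ℂ) + ⟪(Φ^[N] X) (R x), L y⟫_ℂ := by
        conv_lhs => rw [← htel N]
        rw [ContinuousLinearMap.add_apply, ContinuousLinearMap.sum_apply, inner_add_left,
          sum_inner]
      have hsqu : Real.sqrt (∑ k ∈ Finset.range N, u k) ≤ ‖x‖ := by
        refine (Real.sqrt_le_sqrt (huS N)).trans ?_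
        rw [Real.sqrt_sq (norm_nonneg x)]
      have hsqv : Real.sqrt (∑ k ∈ Finset.range N, v k) ≤ ‖y‖ := by
        refine (Real.sqrt_le_sqrt (hvS N)).trans ?_
        rw [Real.sqrt_sq (norm_nonneg y)]
      have hsqvN : Real.sqrt (v N) ≤ ‖y‖ := by
        refine (Real.sqrt_le_sqrt (hterm_v N)).trans ?_
        rw [Real.sqrt_sq (norm_nonneg y)]
      calc ‖(⟪X (R x), L y⟫_ℂ)‖
          ≤ ‖∑ k ∈ Finset.range N, (⟪(Φ^[k] D) (R x), L y⟫_ℂ)‖ +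
            ‖(⟪(Φ^[N] X) (R x), L y⟫_ℂ)‖ := by rw [hXapp]; exact norm_add_le _ _
        _ ≤ (∑ k ∈ Finset.range N, ‖(⟪(Φ^[k] D) (R x), L y⟫_ℂ)‖) +
            ‖X‖ * (Real.sqrt (u N) * Real.sqrt (v N)) :=
            add_le_add (norm_sum_le _ _) (hiter X N (R x) (L y))
        _ ≤ (∑ k ∈ Finset.range N, ‖D‖ * (Real.sqrt (u k) * Real.sqrt (v k))) +
            ‖X‖ * (Real.sqrt (u N) * ‖y‖) := by
            refine add_le_add (Finset.sum_le_sum fun k _ => hiter D k (R x) (L y)) ?_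
            have := mul_le_mul_of_nonneg_left hsqvN (Real.sqrt_nonneg (u N))
            exact mul_le_mul_of_nonneg_left this (norm_nonneg X)
        _ ≤ ‖D‖ * (Real.sqrt (∑ k ∈ Finset.range N, u k) *
              Real.sqrt (∑ k ∈ Finset.range N, v k)) +
            ‖X‖ * (Real.sqrt (u N) * ‖y‖) := by
            refine add_le_add ?_ le_rfl
            rw [← Finset.mul_sum]
            refine mul_le_mul_of_nonneg_left ?_ (norm_nonneg D)
            exact sum_sqrt_mul_sqrt_le' _ _ _ (fun k _ => hu0 k) (fun k _ => hv0 k)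
        _ ≤ ‖D‖ * (‖x‖ * ‖y‖) + ‖X‖ * (Real.sqrt (u N) * ‖y‖) := by
            refine add_le_add ?_ le_rfl
            refine mul_le_mul_of_nonneg_left ?_ (norm_nonneg D)
            exact mul_le_mul hsqu hsqv (Real.sqrt_nonneg _) (norm_nonneg x)
    have hlim2 : Filter.Tendsto
        (fun N => ‖D‖ * (‖x‖ * ‖y‖) + ‖X‖ * (Real.sqrt (u N) * ‖y‖))
        Filter.atTop (nhds (‖D‖ * (‖x‖ * ‖y‖))) := by
      have h3 : Filter.Tendsto (fun N => ‖X‖ * (Real.sqrt (u N) * ‖y‖))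
          Filter.atTop (nhds 0) := by
        have h4 := (hulim.mul_const ‖y‖).const_mul ‖X‖
        simpa using h4
      simpa using tendsto_const_nhds.add h3
    exact ge_of_tendsto' hlim2 bound
  -- conclusion
  refine ContinuousLinearMap.opNorm_le_bound _ (norm_nonneg D) fun x => ?_
  set w : H := (L * X * R) x with hw
  have hw' : w = L (X (R x)) := by rw [hw]; simp [ContinuousLinearMap.mul_apply]
  have h1 : ‖w‖ ^ 2 = RCLike.re (⟪X (R x), L w⟫_ℂ) := by
    have e : (⟪w, w⟫_ℂ) = ⟪X (R x), L w⟫_ℂ := by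
      conv_lhs => rw [hw']
      calc (⟪L (X (R x)), w⟫_ℂ) = ⟪(adjoint L) (X (R x)), w⟫_ℂ := by rw [hLsa]
        _ = ⟪X (R x), L w⟫_ℂ := ContinuousLinearMap.adjoint_inner_left L w (X (R x))
    rw [← inner_self_eq_norm_sq (𝕜 := ℂ) w, e]
  have h2 : RCLike.re (⟪X (R x), L w⟫_ℂ) ≤ ‖D‖ * (‖x‖ * ‖w‖) :=
    (RCLike.re_le_norm _).trans (pairing x w)
  have h3 : ‖w‖ ^ 2 ≤ ‖D‖ * (‖x‖ * ‖w‖) := h1 ▸ h2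
  nlinarith [norm_nonneg w, norm_nonneg x, norm_nonneg D,
    mul_nonneg (norm_nonneg D) (norm_nonneg x)]
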